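/- Let h and k be coprime integers with k ≥ 1. Then 6·k·s(h,k) is an integer. -/

import Mathlib

/-- The sawtooth function ((x)). -/
def saw (x : ℚ) : ℚ := if x.den = 1 then 0 else x - ⌊x⌋ - 1/2

/-- The Dedekind sum s(h,k) = Σ_{m=1}^{k} ((hm/k))((m/k)). -/
noncomputable def dedekindSum (h k : ℤ) : ℚ :=
  ∑ m ∈ Finset.Icc (1 : ℤ) k, saw (h * m / k) * saw (m / k)

private lemma icc_insert (a k : ℤ) (hk : a ≤ k) :
    Finset.Icc a k = insert k (Finset.Icc a (k-1)) := by
  ext m; simp only [Finset.mem_Icc, Finset.mem_insert]; omega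

private lemma sum_id' (n : ℤ) (hn : 0 ≤ n) :
    ∑ m ∈ Finset.Icc (1:ℤ) n, (m:ℚ) = n*(n+1)/2 := by
  lift n to ℕ using hn
  induction n with
  | zero => simp
  | succ n ih =>
      have hcast : ((n+1 : ℕ) : ℤ) = (n:ℤ) + 1 := by push_cast; ring
      rw [hcast, icc_insert 1 ((n:ℤ)+1) (by omega), Finset.sum_insert (by simp),
        show (n:ℤ)+1-1 = (n:ℤ) by ring, ih]
      push_cast; ring

private lemma sum_sq' (n : ℤ) (hn : 0 ≤ n) :
    ∑ m ∈ Finset.Icc (1:ℤ) n, (m:ℚ)^2 = n*(n+1)*(2*n+1)/6 := by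
  lift n to ℕ using hn
  induction n with
  | zero => simp
  | succ n ih =>
      have hcast : ((n+1 : ℕ) : ℤ) = (n:ℤ) + 1 := by push_cast; ring
      rw [hcast, icc_insert 1 ((n:ℤ)+1) (by omega), Finset.sum_insert (by simp),
        show (n:ℤ)+1-1 = (n:ℤ) by ring, ih]
      push_cast; ring

private lemma floor_div_int (a k : ℤ) (hk : 0 < k) : ⌊(a:ℚ)/(k:ℚ)⌋ = a / k := by
  have hk' : ((k.toNat : ℕ) : ℤ) = k := Int.toNat_of_nonneg hk.le
  conv_lhs => rw [← hk']
  push_cast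
  rw [Rat.floor_intCast_div_natCast, hk']

private lemma saw_div (a k : ℤ) (hk : 0 < k) (hnd : ¬ k ∣ a) :
    saw ((a:ℚ)/k) = (a:ℚ)/k - ((a / k : ℤ) : ℚ) - 1/2 := by
  have hden : ¬ ((a:ℚ)/k).den = 1 := by
    rw [Rat.den_div_intCast_eq_one_iff a k (by omega)]; exact hnd
  rw [saw, if_neg hden, floor_div_int a k hk]

theorem dedekindSum_denom (h k : ℤ) (hco : Int.gcd h k = 1) (hk : 1 ≤ k) :
    ∃ n : ℤ, 6 * (k : ℚ) * dedekindSum h k = (n : ℚ) := by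
  have hk0 : (k:ℚ) ≠ 0 := by
    exact_mod_cast (by omega : k ≠ 0)
  obtain ⟨c, hc⟩ := Int.even_mul_succ_self (k-1)
  have hcq : (c:ℚ) = (k:ℚ)*((k:ℚ)-1)/2 := by
    have h0 : (((k-1) * (k-1+1) : ℤ) : ℚ) = ((c + c : ℤ) : ℚ) := by exact_mod_cast congrArg Int.cast hc
    push_cast at h0; linarith
  set f : ℤ → ℤ := fun m => (h*m)/k with hf
  refine ⟨h*(k-1)*(2*k-1) - 3*h*c - 6*(∑ m ∈ Finset.Icc (1:ℤ) (k-1), m * f m)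
    + 3*k*(∑ m ∈ Finset.Icc (1:ℤ) (k-1), f m), ?_⟩
  have hcop : IsCoprime (k:ℤ) h := (Int.isCoprime_iff_gcd_eq_one.mpr hco).symm
  have key : ∀ m ∈ Finset.Icc (1:ℤ) (k-1),
      6*(k:ℚ) * (saw ((h:ℚ)*m/k) * saw ((m:ℚ)/k)) =
        6*(h:ℚ)/k*(m:ℚ)^2 - 3*h*(m:ℚ) - 6*((m:ℚ)*(f m : ℤ)) + 3*k*((f m : ℤ):ℚ)
          - 3*(m:ℚ) + 3*k/2 := by
    intro m hm
    rw [Finset.mem_Icc] at hm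
    have hndm : ¬ k ∣ m := by
      intro hd
      have := Int.le_of_dvd (by omega) hd
      omega
    have hndhm : ¬ k ∣ h*m := fun hd => hndm (hcop.dvd_of_dvd_mul_left hd)
    have h1 : ((h:ℚ)*m)/k = ((h*m : ℤ):ℚ)/k := by push_cast; ring
    have h2 : (m / k : ℤ) = 0 := Int.ediv_eq_zero_of_lt (by omega) (by omega)
    rw [h1, saw_div (h*m) k (by omega) hndhm, saw_div m k (by omega) hndm, h2, hf]
    push_cast
    field_simp
    ring
  rw [dedekindSum, icc_insert 1 k hk, Finset.sum_insert (by simp),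
    show saw ((h:ℚ)*k/k) * saw ((k:ℚ)/k) = 0 by rw [div_self hk0]; simp [saw],
    zero_add, Finset.mul_sum, Finset.sum_congr rfl key]
  rw [Finset.sum_add_distrib, Finset.sum_sub_distrib, Finset.sum_add_distrib,
    Finset.sum_sub_distrib, Finset.sum_sub_distrib, ← Finset.mul_sum, ← Finset.mul_sum,
    ← Finset.mul_sum, ← Finset.mul_sum, ← Finset.mul_sum, Finset.sum_const, sum_id' (k-1) (by omega),
    sum_sq' (k-1) (by omega)]
  have hcard : ((Finset.Icc (1:ℤ) (k-1)).card : ℚ) = (k:ℚ) - 1 := by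
    rw [Int.card_Icc]
    have h' : ((k - 1 + 1 - 1).toNat : ℤ) = k - 1 := by omega
    have h2 : (((k - 1 + 1 - 1).toNat : ℤ) : ℚ) = ((k - 1 : ℤ) : ℚ) := by exact_mod_cast h'
    push_cast at h2
    rw [h2]
  rw [nsmul_eq_mul, hcard]
  push_cast [hcq]
  field_simp
  ring
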